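/- Let (m,n) be a coprime pair of positive integers and let R be a set of m+n integers with 0 ∈ R. Then R is the rank set of some (m,n)-path if and only if for every ℓ ∈ R, exactly one of ℓ+m and ℓ−n belongs to R. -/

import Mathlib

/-- The list of ranks of the lattice points visited by a path (excluding the final
point), starting from rank `r`.  A `true` entry is a north (`u`) step, which adds `m`
to the rank; a `false` entry is an east (`d`) step, which subtracts `n`. -/
def rankWalk (m n : ℤ) : List Bool → ℤ → List ℤ
  | [], _ => []
  | b :: bs, r => r :: rankWalk m n bs (r + if b then m else -n)

/-- An `(m,n)`-path: a word of `n` north steps (`true`) and `m` east steps (`false`). -/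
def IsPathWord (m n : ℕ) (P : List Bool) : Prop :=
  P.length = m + n ∧ P.count true = n

/-- An `(m,n)`-Dyck path: an `(m,n)`-path all of whose ranks are nonnegative. -/
def IsDyckWord (m n : ℕ) (P : List Bool) : Prop :=
  IsPathWord m n P ∧ ∀ r ∈ rankWalk (m : ℤ) (n : ℤ) P 0, 0 ≤ r

/-- The rank set of a path: the ranks of its `m+n` lattice points other than the endpoint. -/
def rankSet (m n : ℕ) (P : List Bool) : Finset ℤ :=
  (rankWalk (m : ℤ) (n : ℤ) P 0).toFinset

/-- `R` is the rank set of some `(m,n)`-path. -/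
def IsRankSet (m n : ℕ) (R : Finset ℤ) : Prop :=
  ∃ P : List Bool, IsPathWord m n P ∧ rankSet m n P = R

/-- `R` is the rank set of some `(m,n)`-Dyck path. -/
def IsDyckRankSet (m n : ℕ) (R : Finset ℤ) : Prop :=
  ∃ P : List Bool, IsDyckWord m n P ∧ rankSet m n P = R

/-! ### Auxiliary lemmas -/

theorem rankWalk_length (m n : ℤ) (P : List Bool) (r : ℤ) :
    (rankWalk m n P r).length = P.length := by
  induction P generalizing r with
  | nil => rfl
  | cons b bs ih => simp [rankWalk, ih]

theorem rankWalk_self_mem (m n : ℤ) (P : List Bool) (r : ℤ) (hP : P ≠ []) :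
    r ∈ rankWalk m n P r := by
  cases P with
  | nil => exact absurd rfl hP
  | cons b bs => simp [rankWalk]

/-- The `i`-th rank is congruent to `r + i*m` modulo `m+n`. -/
theorem rankWalk_get_modEq (m n : ℤ) (P : List Bool) (r : ℤ) (i : ℕ)
    (h : i < (rankWalk m n P r).length) :
    (rankWalk m n P r).get ⟨i, h⟩ ≡ r + (i : ℤ) * m [ZMOD m + n] := by
  induction P generalizing r i with
  | nil => simp [rankWalk] at h
  | cons b bs ih =>
    cases i with
    | zero => simp [rankWalk]
    | succ i =>
      have h' : i < (rankWalk m n bs (r + if b then m else -n)).length := by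
        have := h
        simp only [rankWalk, List.length_cons] at this
        omega
      have hg : (rankWalk m n (b :: bs) r).get ⟨i + 1, h⟩
          = (rankWalk m n bs (r + if b then m else -n)).get ⟨i, h'⟩ := rfl
      rw [hg]
      have hstep : (if b then m else -n) ≡ m [ZMOD m + n] := by
        cases b with
        | true => simp
        | false =>
          show (-n) ≡ m [ZMOD m + n]
          exact (Int.modEq_iff_dvd.mpr ⟨1, by ring⟩)
      have h1 := ih (r + if b then m else -n) i h'
      have h2 : r + (if b then m else -n) + (i : ℤ) * m ≡ r + m + (i : ℤ) * m [ZMOD m + n] :=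
        Int.ModEq.add_right _ (Int.ModEq.add_left r hstep)
      have h3 : r + m + (i : ℤ) * m = r + ((i : ℕ) + 1 : ℤ) * m := by ring
      have h4 : ((i + 1 : ℕ) : ℤ) = ((i : ℕ) : ℤ) + 1 := by push_cast; ring
      rw [h4]
      exact h1.trans (h2.trans (by rw [h3]))

/-- Indices of ranks congruent modulo `m+n` must coincide (for short walks, coprime case). -/
theorem rankWalk_get_inj_mod (m n : ℕ) (hcop : Nat.Coprime m n) (hpos : 0 < m + n)
    (P : List Bool) (hlen : P.length ≤ m + n) (r : ℤ) (i j : ℕ)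
    (hi : i < (rankWalk (m : ℤ) (n : ℤ) P r).length)
    (hj : j < (rankWalk (m : ℤ) (n : ℤ) P r).length)
    (h : (rankWalk (m : ℤ) (n : ℤ) P r).get ⟨i, hi⟩
        ≡ (rankWalk (m : ℤ) (n : ℤ) P r).get ⟨j, hj⟩ [ZMOD (m : ℤ) + n]) :
    i = j := by
  have h1 := rankWalk_get_modEq (m : ℤ) (n : ℤ) P r i hi
  have h2 := rankWalk_get_modEq (m : ℤ) (n : ℤ) P r j hj
  have h3 : r + (i : ℤ) * m ≡ r + (j : ℤ) * m [ZMOD (m : ℤ) + n] :=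
    h1.symm.trans (h.trans h2)
  have h4 : (i : ℤ) * m ≡ (j : ℤ) * m [ZMOD (m : ℤ) + n] :=
    Int.ModEq.add_left_cancel' r h3
  have hg : Int.gcd ((m : ℤ) + n) (m : ℤ) = 1 := by
    have : ((m : ℤ) + n) = ((m + n : ℕ) : ℤ) := by push_cast; ring
    rw [this, Int.gcd_natCast_natCast]
    have : Nat.Coprime m (m + n) := (Nat.coprime_self_add_right).mpr hcop
    exact Nat.Coprime.symm this
  have hpos' : (0 : ℤ) < (m : ℤ) + n := by exact_mod_cast hpos
  have h5 : (i : ℤ) ≡ (j : ℤ) [ZMOD ((m : ℤ) + n) / Int.gcd ((m : ℤ) + n) (m : ℤ)] :=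
    Int.ModEq.cancel_right_div_gcd hpos' h4
  rw [hg] at h5
  simp only [Nat.cast_one, Int.ediv_one] at h5
  have h6 : ((m : ℤ) + n) ∣ (j : ℤ) - i := Int.ModEq.dvd h5
  have hib : i < m + n := lt_of_lt_of_le (by rwa [rankWalk_length] at hi) hlen
  have hjb : j < m + n := lt_of_lt_of_le (by rwa [rankWalk_length] at hj) hlen
  have h7 : (j : ℤ) - i = 0 := by
    refine Int.eq_zero_of_abs_lt_dvd h6 ?_
    rw [abs_sub_lt_iff]
    constructor <;> push_cast <;> omega
  omega

theorem rankWalk_nodup (m n : ℕ) (hcop : Nat.Coprime m n) (hpos : 0 < m + n)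
    (P : List Bool) (hlen : P.length ≤ m + n) (r : ℤ) :
    (rankWalk (m : ℤ) (n : ℤ) P r).Nodup := by
  rw [List.nodup_iff_injective_get]
  rintro ⟨i, hi⟩ ⟨j, hj⟩ hij
  have := rankWalk_get_inj_mod m n hcop hpos P hlen r i j hi hj (by rw [hij])
  simpa using this

/-- Closed form for the final rank. -/
theorem foldl_rank (m n : ℤ) (P : List Bool) (r : ℤ) :
    List.foldl (fun s b => s + if b then m else -n) r P
      = r + m * (P.count true : ℤ) - n * (P.count false : ℤ) := by
  induction P generalizing r with
  | nil => simp
  | cons b bs ih =>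
    cases b <;> simp [List.count_cons, ih] <;> push_cast <;> ring

theorem count_true_add_count_false (P : List Bool) :
    P.count true + P.count false = P.length := by
  induction P with
  | nil => rfl
  | cons b bs ih => cases b <;> simp [List.count_cons] <;> omega

/-- Each rank's successor is in the walk, or is the final rank. -/
theorem rankWalk_succ_mem (m n : ℤ) (P : List Bool) (r ℓ : ℤ)
    (hl : ℓ ∈ rankWalk m n P r) :
    (ℓ + m ∈ rankWalk m n P r ∨ ℓ - n ∈ rankWalk m n P r) ∨
      (ℓ + m = List.foldl (fun s b => s + if b then m else -n) r P ∨
       ℓ - n = List.foldl (fun s b => s + if b then m else -n) r P) := by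
  induction P generalizing r with
  | nil => simp [rankWalk] at hl
  | cons b bs ih =>
    simp only [rankWalk, List.mem_cons] at hl
    rcases hl with rfl | hl
    · -- ℓ = r; its successor is r + (if b then m else -n)
      cases hbs : bs with
      | nil =>
        right
        cases b with
        | true => left; simp [List.foldl, hbs]
        | false => right; simp [List.foldl, hbs]; ring
      | cons c cs =>
        subst hbs
        left
        have hmem : (ℓ + if b then m else -n)
            ∈ rankWalk m n (b :: c :: cs) ℓ := by
          rw [show rankWalk m n (b :: c :: cs) ℓ
              = ℓ :: rankWalk m n (c :: cs) (ℓ + if b then m else -n) from rfl]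
          exact List.mem_cons_of_mem _ (rankWalk_self_mem m n (c :: cs) _ (by simp))
        cases b with
        | true => left; simpa using hmem
        | false =>
          right
          have h2 : ℓ - n = ℓ + -n := by ring
          rw [h2]; simpa using hmem
    · rcases ih _ hl with (h | h) | h
      · left; left; simp only [rankWalk, List.mem_cons]; right; exact h
      · left; right; simp only [rankWalk, List.mem_cons]; right; exact h
      · right
        simpa [List.foldl] using h

/-- Greedy construction of a path word from a rank set. -/
def buildWord (m n : ℤ) (R : Finset ℤ) : ℕ → ℤ → List Bool
  | 0, _ => []
  | k + 1, r =>
      (decide (r + m ∈ R)) :: buildWord m n R k (if r + m ∈ R then r + m else r - n)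

theorem buildWord_length (m n : ℤ) (R : Finset ℤ) (k : ℕ) (r : ℤ) :
    (buildWord m n R k r).length = k := by
  induction k generalizing r with
  | zero => rfl
  | succ k ih => simp [buildWord, ih]

theorem buildWord_invariant (m n : ℤ) (R : Finset ℤ)
    (hor : ∀ ℓ ∈ R, ℓ + m ∈ R ∨ ℓ - n ∈ R) (k : ℕ) :
    ∀ r : ℤ, r ∈ R →
      (∀ x ∈ rankWalk m n (buildWord m n R k r) r, x ∈ R) ∧
        List.foldl (fun s b => s + if b then m else -n) r (buildWord m n R k r) ∈ R := by
  induction k with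
  | zero => intro r hr; constructor
            · intro x hx; simp [buildWord, rankWalk] at hx
            · simpa [buildWord] using hr
  | succ k ih =>
    intro r hr
    set r' : ℤ := if r + m ∈ R then r + m else r - n with hr'def
    have hr' : r' ∈ R := by
      by_cases h : r + m ∈ R
      · simp [hr'def, h]
      · rcases hor r hr with h1 | h1
        · exact absurd h1 h
        · simpa [hr'def, h] using h1
    have hstep : r + (if (decide (r + m ∈ R)) then m else -n) = r' := by
      by_cases h : r + m ∈ R
      · simp [hr'def, h]
      · simp [hr'def, h]; ring
    have hwalk : rankWalk m n (buildWord m n R (k + 1) r) r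
        = r :: rankWalk m n (buildWord m n R k r') r' := by
      simp only [buildWord, rankWalk, hstep, ← hr'def]
    have hfold : List.foldl (fun s b => s + if b then m else -n) r
          (buildWord m n R (k + 1) r)
        = List.foldl (fun s b => s + if b then m else -n) r' (buildWord m n R k r') := by
      simp only [buildWord, List.foldl, hstep, ← hr'def]
    obtain ⟨ihmem, ihfold⟩ := ih r' hr'
    constructor
    · intro x hx
      rw [hwalk] at hx
      rcases List.mem_cons.mp hx with rfl | hx
      · exact hr
      · exact ihmem x hx
    · rw [hfold]; exact ihfold

/-- For a coprime pair `(m,n)` of positive integers and a set `R` of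
`m + n` integers with `0 ∈ R`, `R` is the rank set of some `(m,n)`-path if and only if
for every `ℓ ∈ R`, exactly one of `ℓ + m` and `ℓ - n` belongs to `R`. -/
theorem rank_set_iff_closed_exactlyOne (m n : ℕ) (hm : 0 < m) (hn : 0 < n)
    (hcop : Nat.Coprime m n) (R : Finset ℤ) (hcard : R.card = m + n)
    (h0 : (0 : ℤ) ∈ R) :
    IsRankSet m n R ↔ ∀ ℓ ∈ R, Xor' (ℓ + (m : ℤ) ∈ R) (ℓ - (n : ℤ) ∈ R) := by
  have hpos : 0 < m + n := by omega
  constructor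
  · -- Forward direction
    rintro ⟨P, ⟨hlen, hct⟩, hR⟩
    have hcf : P.count false = m := by
      have := count_true_add_count_false P
      omega
    have hfinal : List.foldl (fun s b => s + if b then (m : ℤ) else -(n : ℤ)) 0 P = 0 := by
      rw [foldl_rank, hct, hcf]
      push_cast; ring
    intro ℓ hℓ
    have hℓw : ℓ ∈ rankWalk (m : ℤ) (n : ℤ) P 0 := by
      rw [← hR] at hℓ
      simpa [rankSet] using hℓ
    -- at least one
    have hone : ℓ + (m : ℤ) ∈ R ∨ ℓ - (n : ℤ) ∈ R := by
      rcases rankWalk_succ_mem (m : ℤ) (n : ℤ) P 0 ℓ hℓw with (h | h) | (h | h)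
      · left; rw [← hR]; simpa [rankSet] using h
      · right; rw [← hR]; simpa [rankSet] using h
      · left; rw [h, hfinal]; exact h0
      · right; rw [h, hfinal]; exact h0
    -- not both
    have hnotboth : ¬(ℓ + (m : ℤ) ∈ R ∧ ℓ - (n : ℤ) ∈ R) := by
      rintro ⟨ha, hb⟩
      rw [← hR] at ha hb
      have ha' : ℓ + (m : ℤ) ∈ rankWalk (m : ℤ) (n : ℤ) P 0 := by
        simpa [rankSet] using ha
      have hb' : ℓ - (n : ℤ) ∈ rankWalk (m : ℤ) (n : ℤ) P 0 := by
        simpa [rankSet] using hb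
      obtain ⟨⟨i, hi⟩, hgi⟩ := List.mem_iff_get.mp ha'
      obtain ⟨⟨j, hj⟩, hgj⟩ := List.mem_iff_get.mp hb'
      have hij : i = j := by
        refine rankWalk_get_inj_mod m n hcop hpos P (le_of_eq hlen) 0 i j hi hj ?_
        rw [hgi, hgj]
        exact Int.modEq_iff_dvd.mpr ⟨-1, by ring⟩
      have : ℓ + (m : ℤ) = ℓ - (n : ℤ) := by
        subst hij; rw [← hgi, ← hgj]
      have hmn0 : (m : ℤ) + n = 0 := by linarith
      have : (0 : ℤ) < (m : ℤ) + n := by exact_mod_cast hpos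
      omega
    rcases hone with h | h
    · exact Or.inl ⟨h, fun h' => hnotboth ⟨h, h'⟩⟩
    · exact Or.inr ⟨h, fun h' => hnotboth ⟨h', h⟩⟩
  · -- Reverse direction
    intro hxor
    have hor : ∀ ℓ ∈ R, ℓ + (m : ℤ) ∈ R ∨ ℓ - (n : ℤ) ∈ R := fun ℓ hℓ =>
      (hxor ℓ hℓ).imp And.left And.left
    set P : List Bool := buildWord (m : ℤ) (n : ℤ) R (m + n) 0 with hPdef
    have hPlen : P.length = m + n := buildWord_length _ _ _ _ _
    obtain ⟨hmem, hfold⟩ := buildWord_invariant (m : ℤ) (n : ℤ) R hor (m + n) 0 h0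
    set W : List ℤ := rankWalk (m : ℤ) (n : ℤ) P 0 with hWdef
    have hWlen : W.length = m + n := by rw [hWdef, rankWalk_length, hPlen]
    have hWnodup : W.Nodup :=
      rankWalk_nodup m n hcop hpos P (le_of_eq hPlen) 0
    have hWsub : W.toFinset ⊆ R := by
      intro x hx
      exact hmem x (List.mem_toFinset.mp hx)
    have hWcard : W.toFinset.card = m + n := by
      rw [List.toFinset_card_of_nodup hWnodup, hWlen]
    have hWeq : W.toFinset = R :=
      Finset.eq_of_subset_of_card_le hWsub (by rw [hWcard, hcard])
    -- the final rank is 0, hence the count of true steps is n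
    set F : ℤ := List.foldl (fun s b => s + if b then (m : ℤ) else -(n : ℤ)) 0 P with hFdef
    have hFW : F ∈ W := by
      rw [← List.mem_toFinset, hWeq]; exact hfold
    have h0W : (0 : ℤ) ∈ W := by
      rw [hWdef]
      exact rankWalk_self_mem _ _ _ _ (by
        intro h
        rw [h] at hPlen
        simp at hPlen
        omega)
    obtain ⟨⟨i, hi⟩, hgi⟩ := List.mem_iff_get.mp hFW
    obtain ⟨⟨j, hj⟩, hgj⟩ := List.mem_iff_get.mp h0W
    have hFmod : F ≡ 0 [ZMOD (m : ℤ) + n] := by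
      rw [hFdef, foldl_rank]
      have hcc : P.count true + P.count false = m + n := by
        rw [count_true_add_count_false, hPlen]
      refine Int.modEq_iff_dvd.mpr ⟨(P.count false : ℤ) - m, ?_⟩
      have : (P.count true : ℤ) = (m : ℤ) + n - (P.count false : ℤ) := by
        push_cast
        omega
      rw [this]
      ring
    have hij : i = j := by
      refine rankWalk_get_inj_mod m n hcop hpos P (le_of_eq hPlen) 0 i j hi hj ?_
      show W.get ⟨i, hi⟩ ≡ W.get ⟨j, hj⟩ [ZMOD (m : ℤ) + n]
      rw [hgi, hgj]
      exact hFmod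
    have hF0 : F = 0 := by subst hij; rw [← hgi, ← hgj]
    have hct : P.count true = n := by
      have hcc : P.count true + P.count false = m + n := by
        rw [count_true_add_count_false, hPlen]
      have hF' : (m : ℤ) * (P.count true : ℤ) - (n : ℤ) * (P.count false : ℤ) = 0 := by
        have := hF0
        rw [hFdef, foldl_rank] at this
        linarith
      have hcfz : (P.count false : ℤ) = (m : ℤ) + n - (P.count true : ℤ) := by
        push_cast; omega
      rw [hcfz] at hF'
      have : ((m : ℤ) + n) * ((P.count true : ℤ) - n) = 0 := by ring_nf; ring_nf at hF'; linarith
      have hmn : ((m : ℤ) + n) ≠ 0 := by positivity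
      have : (P.count true : ℤ) = (n : ℤ) := by
        rcases mul_eq_zero.mp this with h | h
        · exact absurd h hmn
        · linarith
      exact_mod_cast this
    exact ⟨P, ⟨hPlen, hct⟩, by rw [rankSet, ← hWdef, hWeq]⟩
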